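/- arXiv:1801.05604 — 2 statements merged into one kernel-verified Lean document; each statement's English description precedes it below -/
import Mathlib

section
/- Let X, Y, Z be positive real numbers and consider the anchors Ȧ = (0,0,0), Ä = (X,0,0), A⃛ = (0,0,Z) in ℝ³. The map sending each point P = (x,y,z) with 0 ≤ x ≤ X, 0 ≤ y ≤ Y, 0 ≤ z ≤ Z to the triple of Euclidean distances (dist(P,Ȧ), dist(P,Ä), dist(P,A⃛)) is injective; i.e., two points of the box with equal distance triples to these three anchors are equal. -/
lemma sq_dist3 (P Q : EuclideanSpace ℝ (Fin 3)) :
    dist P Q ^ 2 = (P 0 - Q 0) ^ 2 + (P 1 - Q 1) ^ 2 + (P 2 - Q 2) ^ 2 := by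
  rw [EuclideanSpace.dist_eq, Real.sq_sqrt (by positivity)]
  simp [Fin.sum_univ_three, Real.dist_eq, sq_abs]

lemma key_first (X a b c d e f : ℝ) (hX : 0 < X)
    (e1 : a ^ 2 + b ^ 2 + c ^ 2 = d ^ 2 + e ^ 2 + f ^ 2)
    (e2 : (a - X) ^ 2 + b ^ 2 + c ^ 2 = (d - X) ^ 2 + e ^ 2 + f ^ 2) : a = d := by
  have h : X * a = X * d := by nlinarith
  exact mul_left_cancel₀ hX.ne' h

lemma key_mid (b e : ℝ) (hb : 0 ≤ b) (he : 0 ≤ e) (h : b ^ 2 = e ^ 2) : b = e := by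
  have h2 : |b| = |e| := by
    rw [← Real.sqrt_sq_eq_abs, ← Real.sqrt_sq_eq_abs, h]
  rwa [abs_of_nonneg hb, abs_of_nonneg he] at h2

/-- Lemma 1 (canonical viewport): a point of the box `[0,X]×[0,Y]×[0,Z]` is uniquely
determined by its Euclidean distances to the three anchors
`Ȧ = (0,0,0)`, `Ä = (X,0,0)`, `A⃛ = (0,0,Z)`. -/
theorem box_injOn_dist_triple (X Y Z : ℝ) (hX : 0 < X) (hY : 0 < Y) (hZ : 0 < Z) :
    Set.InjOn
      (fun P : EuclideanSpace ℝ (Fin 3) =>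
        (dist P (!₂[0, 0, 0] : EuclideanSpace ℝ (Fin 3)),
         dist P (!₂[X, 0, 0] : EuclideanSpace ℝ (Fin 3)),
         dist P (!₂[0, 0, Z] : EuclideanSpace ℝ (Fin 3))))
      {P : EuclideanSpace ℝ (Fin 3) |
        0 ≤ P 0 ∧ P 0 ≤ X ∧ 0 ≤ P 1 ∧ P 1 ≤ Y ∧ 0 ≤ P 2 ∧ P 2 ≤ Z} := by
  intro P hP Q hQ h
  obtain ⟨h1, h2, h3⟩ : _ ∧ _ ∧ _ := by
    simpa [Prod.ext_iff] using h
  have e1 := congrArg (· ^ 2) h1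
  have e2 := congrArg (· ^ 2) h2
  have e3 := congrArg (· ^ 2) h3
  simp only [sq_dist3] at e1 e2 e3
  simp only [PiLp.toLp_apply, Matrix.cons_val_zero, Matrix.cons_val_one, Matrix.head_cons,
    Matrix.cons_val_two, Matrix.tail_cons, sub_zero] at e1 e2 e3
  obtain ⟨hP0, _, hP1, _, hP2, _⟩ := hP
  obtain ⟨hQ0, _, hQ1, _, hQ2, _⟩ := hQ
  have h0 : P 0 = Q 0 := key_first X (P 0) (P 1) (P 2) (Q 0) (Q 1) (Q 2) hX
    (by linarith) (by linarith)
  have hz : P 2 = Q 2 := key_first Z (P 2) (P 0) (P 1) (Q 2) (Q 0) (Q 1) hZ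
    (by linarith) (by linarith)
  have hy : P 1 = Q 1 := key_mid _ _ hP1 hQ1 (by nlinarith)
  ext i
  fin_cases i
  · exact h0
  · exact hy
  · exact hz
end

section
/- Let X, Y, Z > 0 and let v₁, v₂, v₃ be any three distinct vertices of the box [0,X]×[0,Y]×[0,Z] that all lie on a common face of the box (i.e., the three vertices agree in one coordinate, that coordinate being an extreme value 0 or the corresponding side length). Then the map sending each point P of the box to the triple of Euclidean distances (dist(P,v₁), dist(P,v₂), dist(P,v₃)) is injective on the box. -/
set_option maxHeartbeats 2000000 in
/-- Core planar/axis lemma in pure reals. -/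
lemma viewport_core (L1 L2 L3 : ℝ) (hL1 : 0 < L1) (hL2 : 0 < L2) (hL3 : 0 < L3)
    (a1 a2 b1 b2 c1 c2 s : ℝ)
    (ha1 : a1 = 0 ∨ a1 = L1) (ha2 : a2 = 0 ∨ a2 = L2)
    (hb1 : b1 = 0 ∨ b1 = L1) (hb2 : b2 = 0 ∨ b2 = L2)
    (hc1 : c1 = 0 ∨ c1 = L1) (hc2 : c2 = 0 ∨ c2 = L2)
    (hs : s = 0 ∨ s = L3)
    (hab : ¬(a1 = b1 ∧ a2 = b2)) (hac : ¬(a1 = c1 ∧ a2 = c2))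
    (hbc : ¬(b1 = c1 ∧ b2 = c2))
    (p1 p2 p3 q1 q2 q3 : ℝ)
    (hp3 : 0 ≤ p3) (hp3' : p3 ≤ L3) (hq3 : 0 ≤ q3) (hq3' : q3 ≤ L3)
    (e1 : (p1-a1)^2+(p2-a2)^2+(p3-s)^2 = (q1-a1)^2+(q2-a2)^2+(q3-s)^2)
    (e2 : (p1-b1)^2+(p2-b2)^2+(p3-s)^2 = (q1-b1)^2+(q2-b2)^2+(q3-s)^2)
    (e3 : (p1-c1)^2+(p2-c2)^2+(p3-s)^2 = (q1-c1)^2+(q2-c2)^2+(q3-s)^2) :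
    p1 = q1 ∧ p2 = q2 ∧ p3 = q3 := by
  have l2 : (b1-a1)*(p1-q1) + (b2-a2)*(p2-q2) = 0 := by linear_combination (e1 - e2)/2
  have l3 : (c1-a1)*(p1-q1) + (c2-a2)*(p2-q2) = 0 := by linear_combination (e1 - e3)/2
  have h12 : p1 = q1 ∧ p2 = q2 := by
    clear e1 e2 e3 hs hp3 hp3' hq3 hq3'
    rcases ha1 with rfl|rfl <;> rcases ha2 with rfl|rfl <;>
    rcases hb1 with rfl|rfl <;> rcases hb2 with rfl|rfl <;>
    rcases hc1 with rfl|rfl <;> rcases hc2 with rfl|rfl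
    all_goals try exact absurd rfl (not_and.mp hab rfl)
    all_goals try exact absurd rfl (not_and.mp hac rfl)
    all_goals try exact absurd rfl (not_and.mp hbc rfl)
    all_goals try exact ⟨by nlinarith [l2, l3, hL1, hL2], by nlinarith [l2, l3, hL1, hL2]⟩
  obtain ⟨h1, h2⟩ := h12
  refine ⟨h1, h2, ?_⟩
  subst h1; subst h2
  have hd : (p3 - q3) * (p3 + q3 - 2*s) = 0 := by linear_combination e1
  rcases mul_eq_zero.1 hd with h | h
  · linarith
  · rcases hs with rfl | rfl <;> linarith

/-- General form of Lemma 1: any three distinct vertices of the box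
`[0,X]×[0,Y]×[0,Z]` lying on a common face of the box (i.e. agreeing in one
coordinate, which for vertices is necessarily an extreme value) form a viewport:
the map sending each point of the box to its triple of Euclidean distances to the
three vertices is injective on the box. -/
theorem box_injOn_dist_triple_of_viewport (X Y Z : ℝ)
    (hX : 0 < X) (hY : 0 < Y) (hZ : 0 < Z)
    (v₁ v₂ v₃ : EuclideanSpace ℝ (Fin 3))
    (hvert : ∀ v ∈ ({v₁, v₂, v₃} : Set (EuclideanSpace ℝ (Fin 3))),
      (v 0 = 0 ∨ v 0 = X) ∧ (v 1 = 0 ∨ v 1 = Y) ∧ (v 2 = 0 ∨ v 2 = Z))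
    (hne : v₁ ≠ v₂ ∧ v₁ ≠ v₃ ∧ v₂ ≠ v₃)
    (hface : ∃ i : Fin 3, v₁ i = v₂ i ∧ v₂ i = v₃ i) :
    Set.InjOn (fun P : EuclideanSpace ℝ (Fin 3) => (dist P v₁, dist P v₂, dist P v₃))
      {P : EuclideanSpace ℝ (Fin 3) |
        0 ≤ P 0 ∧ P 0 ≤ X ∧ 0 ≤ P 1 ∧ P 1 ≤ Y ∧ 0 ≤ P 2 ∧ P 2 ≤ Z} := by
  intro P hP Q hQ h
  simp only [Prod.mk.injEq] at h
  obtain ⟨hd1, hd2, hd3⟩ := h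
  obtain ⟨hP0, hP0', hP1, hP1', hP2, hP2'⟩ := hP
  obtain ⟨hQ0, hQ0', hQ1, hQ1', hQ2, hQ2'⟩ := hQ
  have sq : ∀ v : EuclideanSpace ℝ (Fin 3), dist P v = dist Q v →
      (P 0 - v 0)^2 + (P 1 - v 1)^2 + (P 2 - v 2)^2
        = (Q 0 - v 0)^2 + (Q 1 - v 1)^2 + (Q 2 - v 2)^2 := by
    intro v hv
    have h' : dist P v ^ 2 = dist Q v ^ 2 := by rw [hv]
    rw [EuclideanSpace.dist_eq, EuclideanSpace.dist_eq,
      Real.sq_sqrt (by positivity), Real.sq_sqrt (by positivity)] at h'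
    simpa [Fin.sum_univ_three, Real.dist_eq, sq_abs] using h'
  have s1 := sq v₁ hd1
  have s2 := sq v₂ hd2
  have s3 := sq v₃ hd3
  have hv1 := hvert v₁ (by simp)
  have hv2 := hvert v₂ (by simp)
  have hv3 := hvert v₃ (by simp)
  obtain ⟨i, hi1, hi2⟩ := hface
  have hi13 : v₁ i = v₃ i := hi1.trans hi2
  fin_cases i
  · -- common coordinate 0 : plane coordinates 1,2, axis coordinate 0
    replace hi1 : v₁ 0 = v₂ 0 := hi1
    replace hi2 : v₂ 0 = v₃ 0 := hi2
    replace hi13 : v₁ 0 = v₃ 0 := hi13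
    have hab : ¬(v₁ 1 = v₂ 1 ∧ v₁ 2 = v₂ 2) := fun ⟨u, w⟩ =>
      hne.1 (PiLp.ext fun j => by fin_cases j <;> first | exact hi1 | exact u | exact w)
    have hac : ¬(v₁ 1 = v₃ 1 ∧ v₁ 2 = v₃ 2) := fun ⟨u, w⟩ =>
      hne.2.1 (PiLp.ext fun j => by fin_cases j <;> first | exact hi13 | exact u | exact w)
    have hbc : ¬(v₂ 1 = v₃ 1 ∧ v₂ 2 = v₃ 2) := fun ⟨u, w⟩ =>
      hne.2.2 (PiLp.ext fun j => by fin_cases j <;> first | exact hi2 | exact u | exact w)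
    obtain ⟨e1, e2, e3⟩ := viewport_core Y Z X hY hZ hX
      (v₁ 1) (v₁ 2) (v₂ 1) (v₂ 2) (v₃ 1) (v₃ 2) (v₁ 0)
      hv1.2.1 hv1.2.2 hv2.2.1 hv2.2.2 hv3.2.1 hv3.2.2 hv1.1 hab hac hbc
      (P 1) (P 2) (P 0) (Q 1) (Q 2) (Q 0) hP0 hP0' hQ0 hQ0'
      (by linarith [s1]) (by rw [hi1]; linarith [s2]) (by rw [hi13]; linarith [s3])
    exact PiLp.ext fun j => by fin_cases j <;> first | exact e3 | exact e1 | exact e2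
  · -- common coordinate 1
    replace hi1 : v₁ 1 = v₂ 1 := hi1
    replace hi2 : v₂ 1 = v₃ 1 := hi2
    replace hi13 : v₁ 1 = v₃ 1 := hi13
    have hab : ¬(v₁ 0 = v₂ 0 ∧ v₁ 2 = v₂ 2) := fun ⟨u, w⟩ =>
      hne.1 (PiLp.ext fun j => by fin_cases j <;> first | exact hi1 | exact u | exact w)
    have hac : ¬(v₁ 0 = v₃ 0 ∧ v₁ 2 = v₃ 2) := fun ⟨u, w⟩ =>
      hne.2.1 (PiLp.ext fun j => by fin_cases j <;> first | exact hi13 | exact u | exact w)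
    have hbc : ¬(v₂ 0 = v₃ 0 ∧ v₂ 2 = v₃ 2) := fun ⟨u, w⟩ =>
      hne.2.2 (PiLp.ext fun j => by fin_cases j <;> first | exact hi2 | exact u | exact w)
    obtain ⟨e1, e2, e3⟩ := viewport_core X Z Y hX hZ hY
      (v₁ 0) (v₁ 2) (v₂ 0) (v₂ 2) (v₃ 0) (v₃ 2) (v₁ 1)
      hv1.1 hv1.2.2 hv2.1 hv2.2.2 hv3.1 hv3.2.2 hv1.2.1 hab hac hbc
      (P 0) (P 2) (P 1) (Q 0) (Q 2) (Q 1) hP1 hP1' hQ1 hQ1'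
      (by linarith [s1]) (by rw [hi1]; linarith [s2]) (by rw [hi13]; linarith [s3])
    exact PiLp.ext fun j => by fin_cases j <;> first | exact e1 | exact e3 | exact e2
  · -- common coordinate 2
    replace hi1 : v₁ 2 = v₂ 2 := hi1
    replace hi2 : v₂ 2 = v₃ 2 := hi2
    replace hi13 : v₁ 2 = v₃ 2 := hi13
    have hab : ¬(v₁ 0 = v₂ 0 ∧ v₁ 1 = v₂ 1) := fun ⟨u, w⟩ =>
      hne.1 (PiLp.ext fun j => by fin_cases j <;> first | exact hi1 | exact u | exact w)
    have hac : ¬(v₁ 0 = v₃ 0 ∧ v₁ 1 = v₃ 1) := fun ⟨u, w⟩ =>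
      hne.2.1 (PiLp.ext fun j => by fin_cases j <;> first | exact hi13 | exact u | exact w)
    have hbc : ¬(v₂ 0 = v₃ 0 ∧ v₂ 1 = v₃ 1) := fun ⟨u, w⟩ =>
      hne.2.2 (PiLp.ext fun j => by fin_cases j <;> first | exact hi2 | exact u | exact w)
    obtain ⟨e1, e2, e3⟩ := viewport_core X Y Z hX hY hZ
      (v₁ 0) (v₁ 1) (v₂ 0) (v₂ 1) (v₃ 0) (v₃ 1) (v₁ 2)
      hv1.1 hv1.2.1 hv2.1 hv2.2.1 hv3.1 hv3.2.1 hv1.2.2 hab hac hbc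
      (P 0) (P 1) (P 2) (Q 0) (Q 1) (Q 2) hP2 hP2' hQ2 hQ2'
      (by linarith [s1]) (by rw [hi1]; linarith [s2]) (by rw [hi13]; linarith [s3])
    exact PiLp.ext fun j => by fin_cases j <;> first | exact e1 | exact e2 | exact e3
end
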